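/- Let F : ℝ^n → [0,∞) be measurable. Then ‖F‖_BLO² ≤ ‖F²‖_BLO, i.e., if F² ∈ BLO(ℝ^n) with constant C, then F ∈ BLO(ℝ^n) with constant at most √C. -/

import Mathlib

open MeasureTheory Metric

abbrev E (n : ℕ) := EuclideanSpace ℝ (Fin n)

lemma exists_frequently_le_aux {α : Type*} [MeasurableSpace α] (μ : Measure α) [NeZero μ]
    (f : α → ℝ) : ∃ u : ℝ, ∃ᶠ x in ae μ, f x ≤ u := by
  by_contra h
  push_neg at h
  have h' : ∀ n : ℕ, μ {x | f x ≤ (n : ℝ)} = 0 := by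
    intro n
    have hn : ∀ᵐ x ∂μ, ¬ f x ≤ (n : ℝ) := (h n).mono fun x hx => not_le.mpr hx
    rw [ae_iff] at hn
    simpa using hn
  have hcov : (Set.univ : Set α) ⊆ ⋃ n : ℕ, {x | f x ≤ (n : ℝ)} := by
    intro x _
    obtain ⟨n, hn⟩ := exists_nat_ge (f x)
    exact Set.mem_iUnion.2 ⟨n, hn⟩
  have : μ Set.univ = 0 :=
    le_antisymm ((measure_mono hcov).trans (measure_iUnion_null h').le) zero_le
  exact (Measure.measure_univ_ne_zero.mpr (NeZero.ne μ)) this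

lemma le_essInf_of_ae_le_real {α : Type*} [MeasurableSpace α] {μ : Measure α} [NeZero μ]
    {f : α → ℝ} {c : ℝ} (h : ∀ᵐ x ∂μ, c ≤ f x) : c ≤ essInf f μ := by
  obtain ⟨u, hu⟩ := exists_frequently_le_aux μ f
  refine Filter.le_liminf_of_le ?_ h
  exact Filter.IsCobounded.of_frequently_le (l := u) (by rwa [Filter.frequently_map])

/-- `‖F‖_BLO² ≤ ‖F²‖_BLO`: if `F² ∈ BLO(ℝⁿ)` with constant `C`, then
`F ∈ BLO(ℝⁿ)` with constant at most `√C`. -/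
theorem stmt_3 (n : ℕ) (F : E n → ℝ) (hF : Measurable F) (hpos : ∀ x, 0 ≤ F x)
    (C : ℝ) (hC : 0 ≤ C)
    (hloc : MeasureTheory.LocallyIntegrable (fun x => F x ^ 2) volume)
    (hBLO : ∀ (x₀ : E n) (r : ℝ), 0 < r →
      ⨍ x in ball x₀ r,
        (F x ^ 2 - essInf (fun y => F y ^ 2) (volume.restrict (ball x₀ r))) ≤ C) :
    ∀ (x₀ : E n) (r : ℝ), 0 < r →
      ⨍ x in ball x₀ r, (F x - essInf F (volume.restrict (ball x₀ r))) ≤ Real.sqrt C := by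
  intro x₀ r hr
  set μ : Measure (E n) := volume.restrict (ball x₀ r) with hμ
  have hfin : IsFiniteMeasure μ :=
    ⟨by rw [hμ, Measure.restrict_apply_univ]; exact measure_ball_lt_top⟩
  have hne : NeZero μ := by
    refine ⟨fun h0 => ?_⟩
    have : μ Set.univ = 0 := by rw [h0]; simp
    rw [hμ, Measure.restrict_apply_univ] at this
    exact absurd this (measure_ball_pos volume x₀ hr).ne'
  set m : ℝ := essInf F μ with hm
  set m2 : ℝ := essInf (fun y => F y ^ 2) μ with hm2
  -- a.e. bounds
  have hbddF : Filter.IsBoundedUnder (· ≥ ·) (ae μ) F :=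
    ⟨0, Filter.eventually_map.2 (Filter.Eventually.of_forall hpos)⟩
  have hbddF2 : Filter.IsBoundedUnder (· ≥ ·) (ae μ) (fun y => F y ^ 2) :=
    ⟨0, Filter.eventually_map.2 (Filter.Eventually.of_forall fun x => sq_nonneg _)⟩
  have hm_le : ∀ᵐ x ∂μ, m ≤ F x := ae_essInf_le hbddF
  have hm2_le : ∀ᵐ x ∂μ, m2 ≤ F x ^ 2 := ae_essInf_le hbddF2
  have hm0 : 0 ≤ m := le_essInf_of_ae_le_real (Filter.Eventually.of_forall hpos)
  have hm2_0 : 0 ≤ m2 :=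
    le_essInf_of_ae_le_real (Filter.Eventually.of_forall fun x => sq_nonneg _)
  have hm2m : m2 ≤ m ^ 2 := by
    have hsqrt : Real.sqrt m2 ≤ m := by
      refine le_essInf_of_ae_le_real ?_
      filter_upwards [hm2_le] with x hx
      calc Real.sqrt m2 ≤ Real.sqrt (F x ^ 2) := Real.sqrt_le_sqrt hx
        _ = F x := by rw [Real.sqrt_sq (hpos x)]
    calc m2 = Real.sqrt m2 ^ 2 := (Real.sq_sqrt hm2_0).symm
      _ ≤ m ^ 2 := by
          have := Real.sqrt_nonneg m2
          nlinarith
  -- integrability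
  have hFs : Integrable (fun x => F x ^ 2) μ := by
    rw [hμ]
    exact ((hloc.integrableOn_isCompact (isCompact_closedBall x₀ r)).mono_set
      ball_subset_closedBall)
  have hFi : Integrable F μ := by
    refine Integrable.mono' (hFs.add (integrable_const 1)) hF.aestronglyMeasurable ?_
    refine Filter.Eventually.of_forall fun x => ?_
    rw [Real.norm_eq_abs, abs_of_nonneg (hpos x)]
    simp only [Pi.add_apply]
    nlinarith [hpos x]
  have hfi : Integrable (fun x => F x - m) μ := hFi.sub (integrable_const m)
  have hgi : Integrable (fun x => (F x - m) ^ 2) μ := by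
    have : (fun x => (F x - m) ^ 2) = fun x => F x ^ 2 - 2 * m * F x + m ^ 2 := by
      funext x; ring
    rw [this]
    exact (hFs.sub (hFi.const_mul (2 * m))).add (integrable_const _)
  have hdi : Integrable (fun x => F x ^ 2 - m2) μ := hFs.sub (integrable_const m2)
  -- Jensen: (⨍ (F-m))² ≤ ⨍ (F-m)²
  have hconv : ConvexOn ℝ (Set.univ : Set ℝ) (fun y : ℝ => y ^ 2) :=
    Even.convexOn_pow even_two
  have key : (⨍ x, (F x - m) ∂μ) ^ 2 ≤ ⨍ x, (F x - m) ^ 2 ∂μ := by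
    have := hconv.map_average_le (continuous_pow 2).continuousOn isClosed_univ
      (Filter.Eventually.of_forall fun x => Set.mem_univ _) hfi
      (by exact hgi)
    simpa using this
  -- average nonneg
  have havg_nonneg : 0 ≤ ⨍ x, (F x - m) ∂μ := by
    rw [average_eq]
    refine smul_nonneg (by positivity) ?_
    refine integral_nonneg_of_ae ?_
    filter_upwards [hm_le] with x hx
    exact sub_nonneg.mpr hx
  -- pointwise comparison a.e.
  have hcomp : ⨍ x, (F x - m) ^ 2 ∂μ ≤ ⨍ x, (F x ^ 2 - m2) ∂μ := by
    rw [average_eq, average_eq]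
    refine smul_le_smul_of_nonneg_left ?_ (by positivity)
    refine integral_mono_ae hgi hdi ?_
    filter_upwards [hm_le] with x hx
    nlinarith
  have hC' : ⨍ x, (F x ^ 2 - m2) ∂μ ≤ C := hBLO x₀ r hr
  have : (⨍ x, (F x - m) ∂μ) ^ 2 ≤ C := key.trans (hcomp.trans hC')
  exact (Real.le_sqrt havg_nonneg hC).mpr this
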